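/- Let W ∈ ℝ^{n×n} and m > 0 satisfy (I − W) ⪰ mI, and let J ∈ ℝ^{n×n} be diagonal with 0 ≤ Jᵢᵢ ≤ 1 for all i, with J^{1/2} the entrywise square root. Then every complex eigenvalue λ of the matrix I − J^{1/2} W J^{1/2} satisfies Re λ > 0 (indeed Re λ ≥ min(1, m) > 0). -/

import Mathlib

open Matrix Polynomial

private lemma re_dot_aux (n : ℕ) (W : Matrix (Fin n) (Fin n) ℝ) (u : Fin n → ℂ) :
    (star u ⬝ᵥ (W.map (algebraMap ℝ ℂ)) *ᵥ u).re =
      (fun i => (u i).re) ⬝ᵥ W *ᵥ (fun i => (u i).re) +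
      (fun i => (u i).im) ⬝ᵥ W *ᵥ (fun i => (u i).im) := by
  simp only [dotProduct, mulVec, dotProduct, Pi.star_apply, Finset.mul_sum, Complex.re_sum,
    ← Finset.sum_add_distrib]
  refine Finset.sum_congr rfl fun i _ => Finset.sum_congr rfl fun j _ => ?_
  simp only [Matrix.map_apply, Complex.coe_algebraMap, Complex.mul_re, Complex.mul_im,
    Complex.ofReal_re, Complex.ofReal_im, RCLike.star_def, Complex.conj_re, Complex.conj_im]
  ring

private lemma quad_bound (n : ℕ) (W : Matrix (Fin n) (Fin n) ℝ) (m : ℝ)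
    (hmono : ((1/2 : ℝ) • ((1 - W) + (1 - W)ᵀ) -
        m • (1 : Matrix (Fin n) (Fin n) ℝ)).PosSemidef)
    (x : Fin n → ℝ) : x ⬝ᵥ W.mulVec x ≤ (1 - m) * (x ⬝ᵥ x) := by
  have h := hmono.dotProduct_mulVec_nonneg x
  simp only [star_trivial, Matrix.sub_mulVec, Matrix.add_mulVec, Matrix.smul_mulVec,
    Matrix.one_mulVec, dotProduct_sub, dotProduct_add, dotProduct_smul, smul_eq_mul] at h
  have ht : x ⬝ᵥ (1 - W)ᵀ.mulVec x = x ⬝ᵥ (1 - W).mulVec x := by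
    rw [Matrix.dotProduct_mulVec, Matrix.vecMul_transpose, dotProduct_comm,
      Matrix.dotProduct_mulVec]
  rw [ht] at h
  simp only [Matrix.sub_mulVec, Matrix.one_mulVec, dotProduct_sub] at h
  linarith

/-- **Eigenvalues of `I - J^{1/2} W J^{1/2}` have positive real part.**
If `I - W ⪰ mI` with `m > 0` and `J` is diagonal with `0 ≤ Jᵢᵢ ≤ 1`, then every
complex eigenvalue `λ` of `I - J^{1/2} W J^{1/2}` (a root of its characteristic
polynomial over `ℂ`) satisfies `Re λ ≥ min(1, m) > 0`. -/
theorem eigenvalues_pos_real_part_sqrt (n : ℕ)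
    (W : Matrix (Fin n) (Fin n) ℝ) (m : ℝ) (hm : 0 < m)
    (hmono : ((1/2 : ℝ) • ((1 - W) + (1 - W)ᵀ) -
        m • (1 : Matrix (Fin n) (Fin n) ℝ)).PosSemidef)
    (d : Fin n → ℝ) (hd : ∀ i, 0 ≤ d i ∧ d i ≤ 1) (lam : ℂ)
    (hlam : (((1 - Matrix.diagonal (fun i => Real.sqrt (d i)) * W *
        Matrix.diagonal (fun i => Real.sqrt (d i))).map
          (algebraMap ℝ ℂ)).charpoly).IsRoot lam) :
    0 < lam.re ∧ min 1 m ≤ lam.re := by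
  classical
  set S : Matrix (Fin n) (Fin n) ℝ := Matrix.diagonal (fun i => Real.sqrt (d i)) with hS
  set B : Matrix (Fin n) (Fin n) ℂ := (1 - S * W * S).map (algebraMap ℝ ℂ) with hB
  -- Step 1: eigenvector
  have hdet : (lam • (1 : Matrix (Fin n) (Fin n) ℂ) - B).det = 0 := by
    have h2 : (Polynomial.evalRingHom lam) B.charpoly = 0 := hlam
    rw [Matrix.charpoly, RingHom.map_det] at h2
    convert h2 using 2
    ext i j
    by_cases hij : i = j <;>
      simp [hij, Matrix.charmatrix_apply, Matrix.smul_apply, Matrix.one_apply,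
        Matrix.diagonal_apply]
  obtain ⟨v, hv, hveq⟩ := Matrix.exists_mulVec_eq_zero_iff.mpr hdet
  have heig : B.mulVec v = lam • v := by
    rw [Matrix.sub_mulVec, sub_eq_zero] at hveq
    rw [← hveq, Matrix.smul_mulVec, Matrix.one_mulVec]
  -- Step 2: set up vectors
  set u : Fin n → ℂ := fun i => (Real.sqrt (d i) : ℂ) * v i with hu
  set N : ℝ := ∑ i, Complex.normSq (v i) with hN
  have hNpos : 0 < N := by
    obtain ⟨i, hi⟩ := Function.ne_iff.mp hv
    exact Finset.sum_pos' (fun j _ => Complex.normSq_nonneg _)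
      ⟨i, Finset.mem_univ i, by simpa [Complex.normSq_pos] using hi⟩
  -- star v ⬝ᵥ v = N
  have hvvN : star v ⬝ᵥ v = (N : ℂ) := by
    simp only [dotProduct, Pi.star_apply, hN, Complex.ofReal_sum]
    exact Finset.sum_congr rfl fun i _ => by
      rw [RCLike.star_def, mul_comm, Complex.mul_conj]
  -- star v ⬝ᵥ B *ᵥ v computation
  have hSmap : S.map (algebraMap ℝ ℂ) =
      Matrix.diagonal (fun i => ((Real.sqrt (d i) : ℝ) : ℂ)) := by
    rw [hS, Matrix.diagonal_map (map_zero _)]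
    congr 1
  have hBv : star v ⬝ᵥ B *ᵥ v =
      (N : ℂ) - star u ⬝ᵥ (W.map (algebraMap ℝ ℂ)) *ᵥ u := by
    have hmapmul : B = 1 - S.map (algebraMap ℝ ℂ) * W.map (algebraMap ℝ ℂ) *
        S.map (algebraMap ℝ ℂ) := by
      rw [hB]
      simp only [← RingHom.mapMatrix_apply]
      rw [_root_.map_sub, _root_.map_mul, _root_.map_mul, _root_.map_one]
    rw [hmapmul, Matrix.sub_mulVec, Matrix.one_mulVec, dotProduct_sub, hvvN, hSmap]
    congr 1
    rw [← Matrix.mulVec_mulVec, ← Matrix.mulVec_mulVec]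
    have h1 : Matrix.diagonal (fun i => ((Real.sqrt (d i) : ℝ) : ℂ)) *ᵥ v = u := by
      funext i; simp [Matrix.mulVec_diagonal, hu]
    rw [h1]
    simp only [dotProduct, Matrix.mulVec_diagonal, Pi.star_apply, hu]
    refine Finset.sum_congr rfl fun i _ => ?_
    simp only [RCLike.star_def, _root_.map_mul, Complex.conj_ofReal]
    ring
  -- take real parts of the eigenvalue relation
  have hre : lam.re * N = N - ((fun i => (u i).re) ⬝ᵥ W *ᵥ (fun i => (u i).re) +
      (fun i => (u i).im) ⬝ᵥ W *ᵥ (fun i => (u i).im)) := by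
    have e1 : star v ⬝ᵥ B *ᵥ v = lam * (N : ℂ) := by
      rw [heig, dotProduct_smul, hvvN, smul_eq_mul]
    rw [hBv] at e1
    have e2 := congrArg Complex.re e1
    simp only [Complex.sub_re, Complex.ofReal_re, Complex.mul_re, Complex.ofReal_im,
      mul_zero, sub_zero] at e2
    rw [← e2, re_dot_aux]
  -- bounds
  set a : Fin n → ℝ := fun i => (u i).re with ha
  set b : Fin n → ℝ := fun i => (u i).im with hb
  have hP : a ⬝ᵥ a + b ⬝ᵥ b = ∑ i, d i * Complex.normSq (v i) := by
    simp only [dotProduct, ← Finset.sum_add_distrib]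
    refine Finset.sum_congr rfl fun i _ => ?_
    simp only [ha, hb, hu, Complex.mul_re, Complex.mul_im, Complex.ofReal_re, Complex.ofReal_im,
      Complex.normSq_apply]
    have : Real.sqrt (d i) * Real.sqrt (d i) = d i :=
      Real.mul_self_sqrt (hd i).1
    nlinarith [this]
  have hPN : ∑ i, d i * Complex.normSq (v i) ≤ N := by
    rw [hN]
    refine Finset.sum_le_sum fun i _ => ?_
    nlinarith [(hd i).2, Complex.normSq_nonneg (v i)]
  have hPnn : 0 ≤ ∑ i, d i * Complex.normSq (v i) :=
    Finset.sum_nonneg fun i _ => mul_nonneg (hd i).1 (Complex.normSq_nonneg _)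
  have hqa := quad_bound n W m hmono a
  have hqb := quad_bound n W m hmono b
  have haa : a ⬝ᵥ a = ∑ i, a i * a i := rfl
  have hbb : b ⬝ᵥ b = ∑ i, b i * b i := rfl
  -- combine
  have hkey : min 1 m * N ≤ lam.re * N := by
    rcases le_total m 1 with hm1 | hm1
    · rw [min_eq_right hm1]
      have h1 : a ⬝ᵥ W *ᵥ a + b ⬝ᵥ W *ᵥ b ≤ (1 - m) * (a ⬝ᵥ a + b ⬝ᵥ b) := by linarith
      have h2 : (1 - m) * (a ⬝ᵥ a + b ⬝ᵥ b) ≤ (1 - m) * N := by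
        rw [hP]
        exact mul_le_mul_of_nonneg_left hPN (by linarith)
      nlinarith [hre]
    · rw [min_eq_left hm1]
      have h1 : a ⬝ᵥ W *ᵥ a + b ⬝ᵥ W *ᵥ b ≤ (1 - m) * (a ⬝ᵥ a + b ⬝ᵥ b) := by linarith
      have h2 : (1 - m) * (a ⬝ᵥ a + b ⬝ᵥ b) ≤ 0 := by
        rw [hP]
        exact mul_nonpos_of_nonpos_of_nonneg (by linarith) hPnn
      nlinarith [hre]
  have hmin : min 1 m ≤ lam.re := le_of_mul_le_mul_right
    (by simpa [mul_comm] using hkey) hNpos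
  exact ⟨lt_of_lt_of_le (lt_min one_pos hm) hmin, hmin⟩
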